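/- The Laplace mechanism is ε-differentially private: if f : D → ℝ has global sensitivity GS_f = max over neighboring datasets D, D' of |f(D) − f(D')|, then the mechanism A(D) = f(D) + Z, where Z is drawn from the Laplace distribution with scale GS_f/ε, satisfies Pr[A(D) ∈ S] ≤ e^ε · Pr[A(D') ∈ S] for all neighboring D, D' and all measurable sets S ⊆ ℝ. -/

import Mathlib

open MeasureTheory
open Real Set


lemma lap_integrable (c a : ℝ) (hc : 0 < c) :
    Integrable (fun z : ℝ => Real.exp (-(c * |z - a|))) := by
  have key : Integrable (fun z : ℝ => Real.exp (-(c * |z|))) := by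
    have hIoi : IntegrableOn (fun z : ℝ => Real.exp (-(c * |z|))) (Ioi 0) := by
      refine ((exp_neg_integrableOn_Ioi 0 hc)).congr_fun (fun x hx => ?_) measurableSet_Ioi
      simp only [abs_of_pos (mem_Ioi.mp hx), neg_mul]
    have hIic : IntegrableOn (fun z : ℝ => Real.exp (-(c * |z|))) (Iic 0) := by
      have h2 := (hIoi.integrable_indicator measurableSet_Ioi).comp_neg
      refine (integrable_indicator_iff measurableSet_Iic).mp (h2.congr ?_)
      have h0 : ∀ᵐ x : ℝ, x ≠ (0 : ℝ) := by
        rw [ae_iff]; simp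
      filter_upwards [h0] with x hx
      simp only [Function.comp, Set.indicator, mem_Iic, mem_Ioi]
      rcases lt_trichotomy x 0 with h | h | h
      · simp [h.le, neg_pos.mpr h, abs_neg]
      · exact absurd h hx
      · simp [not_le.mpr h, neg_pos, not_lt.mpr h.le]
    have := hIic.union hIoi
    rwa [Iic_union_Ioi, integrableOn_univ] at this
  simpa using key.comp_sub_right a

/-- The Laplace mechanism `A(D) = f(D) + Lap(GS/ε)` is `ε`-differentially private:
for neighboring datasets `D, D'` and any measurable set `S` of outputs,
`Pr[A(D) ∈ S] ≤ exp ε · Pr[A(D') ∈ S]`, where the output distribution of `A(D)` has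
Laplace density `z ↦ (ε/(2·GS)) · exp(-ε·|z - f D|/GS)` (scale `b = GS/ε`). -/
theorem laplace_mechanism_dp {Dataset : Type*} (Neighbor : Dataset → Dataset → Prop)
    (f : Dataset → ℝ) (GS ε : ℝ) (hGS : 0 < GS) (hε : 0 < ε)
    (hsens : ∀ D D', Neighbor D D' → |f D - f D'| ≤ GS)
    (D D' : Dataset) (hN : Neighbor D D') (S : Set ℝ) (hS : MeasurableSet S) :
    ∫ z in S, (ε / (2 * GS)) * Real.exp (-(ε * |z - f D|) / GS) ≤
      Real.exp ε * ∫ z in S, (ε / (2 * GS)) * Real.exp (-(ε * |z - f D'|) / GS) := by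
  have hint : ∀ a : ℝ,
      Integrable (fun z : ℝ => (ε / (2 * GS)) * Real.exp (-(ε * |z - a|) / GS)) := by
    intro a
    have h := (lap_integrable (ε / GS) a (div_pos hε hGS)).const_mul (ε / (2 * GS))
    refine h.congr ?_
    filter_upwards with z
    congr 1
    rw [neg_div, div_mul_eq_mul_div]
  have hpt : ∀ z ∈ S,
      (ε / (2 * GS)) * Real.exp (-(ε * |z - f D|) / GS) ≤
        Real.exp ε * ((ε / (2 * GS)) * Real.exp (-(ε * |z - f D'|) / GS)) := by
    intro z _
    have h1 : |z - f D'| ≤ |z - f D| + GS := by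
      calc |z - f D'| ≤ |z - f D| + |f D - f D'| := abs_sub_le z (f D) (f D')
        _ ≤ |z - f D| + GS := by linarith [hsens D D' hN]
    have hexp : -(ε * |z - f D|) / GS ≤ ε + -(ε * |z - f D'|) / GS := by
      rw [div_le_iff₀ hGS, add_mul, div_mul_cancel₀ _ hGS.ne']
      nlinarith [mul_le_mul_of_nonneg_left h1 hε.le]
    have hc : (0:ℝ) ≤ ε / (2 * GS) := by positivity
    calc (ε / (2 * GS)) * Real.exp (-(ε * |z - f D|) / GS)
        ≤ (ε / (2 * GS)) * Real.exp (ε + -(ε * |z - f D'|) / GS) :=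
          mul_le_mul_of_nonneg_left (Real.exp_le_exp.mpr hexp) hc
      _ = Real.exp ε * ((ε / (2 * GS)) * Real.exp (-(ε * |z - f D'|) / GS)) := by
          rw [Real.exp_add]; ring
  calc ∫ z in S, (ε / (2 * GS)) * Real.exp (-(ε * |z - f D|) / GS)
      ≤ ∫ z in S, Real.exp ε * ((ε / (2 * GS)) * Real.exp (-(ε * |z - f D'|) / GS)) :=
        setIntegral_mono_on (hint (f D)).integrableOn
          (((hint (f D')).const_mul (Real.exp ε)).integrableOn) hS hpt
    _ = Real.exp ε * ∫ z in S, (ε / (2 * GS)) * Real.exp (-(ε * |z - f D'|) / GS) :=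
        integral_const_mul _ _
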